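/- For all real z with |z| < 1, ∑_{n=1}^∞ (H_n / n) z^n = Li₂(z) + (1/2) log²(1-z). -/

import Mathlib

/-- The `n`-th harmonic number `H_n = ∑_{k=1}^n 1/k`. -/
noncomputable def H (n : ℕ) : ℝ := ∑ k ∈ Finset.range n, (1 : ℝ) / (k + 1)

/-- The dilogarithm `Li₂(z) = ∑_{n=1}^∞ z^n / n²`. -/
noncomputable def Li2 (z : ℝ) : ℝ := ∑' n : ℕ, z ^ (n + 1) / ((n : ℝ) + 1) ^ 2

lemma H_succ (n : ℕ) : H (n + 1) = H n + 1 / (n + 1) := by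
  simp [H, Finset.sum_range_succ]

lemma sum_reflect_aux (n : ℕ) :
    ∑ k ∈ Finset.range (n + 1), (1 : ℝ) / ((n - k : ℕ) + 1) = H (n + 1) := by
  have := Finset.sum_range_reflect (fun j => (1 : ℝ) / (j + 1)) (n + 1)
  simpa [H] using this

lemma cauchy_term (z : ℝ) (n : ℕ) :
    ∑ k ∈ Finset.range (n + 1), (z ^ (k + 1) / (k + 1)) * (z ^ (n - k + 1) / ((n - k : ℕ) + 1))
      = 2 * (H (n + 1) / (n + 2)) * z ^ (n + 2) := by
  have key : ∀ k ∈ Finset.range (n + 1),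
      (z ^ (k + 1) / (k + 1)) * (z ^ (n - k + 1) / ((n - k : ℕ) + 1))
        = z ^ (n + 2) / (n + 2) * ((1 : ℝ) / (k + 1) + 1 / ((n - k : ℕ) + 1)) := by
    intro k hk
    rw [Finset.mem_range] at hk
    have hk' : k ≤ n := Nat.lt_succ_iff.mp hk
    have hpow : z ^ (k + 1) * z ^ (n - k + 1) = z ^ (n + 2) := by
      rw [← pow_add]; congr 1; omega
    have hcast : ((n - k : ℕ) : ℝ) = (n : ℝ) - k := Nat.cast_sub hk'
    rw [hcast]
    have h1 : (k : ℝ) + 1 ≠ 0 := by positivity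
    have h2 : (n : ℝ) - k + 1 ≠ 0 := by
      have : (k : ℝ) ≤ n := by exact_mod_cast hk'
      nlinarith
    have h3 : (n : ℝ) + 2 ≠ 0 := by positivity
    rw [div_mul_div_comm, hpow]
    field_simp
    ring
  rw [Finset.sum_congr rfl key, ← Finset.mul_sum, Finset.sum_add_distrib]
  have : ∑ k ∈ Finset.range (n + 1), (1 : ℝ) / (k + 1) = H (n + 1) := by simp [H]
  rw [this, sum_reflect_aux]
  ring

theorem harmonic_over_n_generating_function (z : ℝ) (hz : |z| < 1) :
    ∑' n : ℕ, H (n + 1) / ((n : ℝ) + 1) * z ^ (n + 1)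
      = Li2 z + (1 / 2) * Real.log (1 - z) ^ 2 := by
  set L := -Real.log (1 - z) with hL
  have hf : HasSum (fun n : ℕ => z ^ (n + 1) / (n + 1)) L :=
    Real.hasSum_pow_div_log_of_abs_lt_one hz
  have hgeo : Summable (fun n : ℕ => |z| ^ (n + 1)) :=
    (summable_geometric_of_lt_one (abs_nonneg z) hz).comp_injective (add_left_injective 1)
  have hfn : Summable (fun n : ℕ => ‖z ^ (n + 1) / ((n : ℝ) + 1)‖) := by
    apply hgeo.of_nonneg_of_le (fun n => norm_nonneg _)
    intro n
    rw [norm_div, norm_pow, Real.norm_eq_abs, Real.norm_eq_abs]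
    have h1 : (1 : ℝ) ≤ |(n : ℝ) + 1| := by
      rw [abs_of_pos (by positivity)]; linarith [Nat.cast_nonneg (α := ℝ) n]
    calc |z| ^ (n + 1) / |(n : ℝ) + 1| ≤ |z| ^ (n + 1) / 1 := by
          apply div_le_div_of_nonneg_left (by positivity) one_pos h1
      _ = |z| ^ (n + 1) := by ring
  -- Cauchy product
  have hcauchy : HasSum
      (fun n : ℕ => ∑ k ∈ Finset.range (n + 1),
        (z ^ (k + 1) / (k + 1)) * (z ^ (n - k + 1) / ((n - k : ℕ) + 1))) (L * L) := by
    have := hasSum_sum_range_mul_of_summable_norm hfn hfn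
    rwa [hf.tsum_eq] at this
  rw [funext (cauchy_term z)] at hcauchy
  -- halve it
  have hhalf : HasSum (fun n : ℕ => H (n + 1) / (n + 2) * z ^ (n + 2)) (L * L / 2) := by
    have := hcauchy.div_const 2
    convert this using 2 with n
    all_goals first | rfl | ring
  -- shift index: g n := H n / (n+1) * z^(n+1), g 0 = 0
  have hg : HasSum (fun n : ℕ => H n / ((n : ℝ) + 1) * z ^ (n + 1)) (L * L / 2) := by
    have hshift : HasSum (fun n : ℕ => H (n + 1) / (((n : ℕ) + 1 : ℝ) + 1) * z ^ (n + 1 + 1))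
        (L * L / 2) := by
      convert hhalf using 2 with n
      ring_nf
    have := (hasSum_nat_add_iff (f := fun n : ℕ => H n / ((n : ℝ) + 1) * z ^ (n + 1)) 1).mp
      (by exact_mod_cast hshift)
    simpa [H] using this
  -- Li2 part
  have hLisum : Summable (fun n : ℕ => z ^ (n + 1) / ((n : ℝ) + 1) ^ 2) := by
    apply Summable.of_norm
    apply hgeo.of_nonneg_of_le (fun n => norm_nonneg _)
    intro n
    rw [norm_div, norm_pow, norm_pow, Real.norm_eq_abs, Real.norm_eq_abs]
    have h1 : (1 : ℝ) ≤ |(n : ℝ) + 1| ^ 2 := by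
      rw [abs_of_pos (by positivity)]
      nlinarith [Nat.cast_nonneg (α := ℝ) n]
    calc |z| ^ (n + 1) / |(n : ℝ) + 1| ^ 2 ≤ |z| ^ (n + 1) / 1 := by
          apply div_le_div_of_nonneg_left (by positivity) one_pos h1
      _ = |z| ^ (n + 1) := by ring
  have hLi : HasSum (fun n : ℕ => z ^ (n + 1) / ((n : ℝ) + 1) ^ 2) (Li2 z) := hLisum.hasSum
  have htot := hLi.add hg
  have heq : (fun n : ℕ => z ^ (n + 1) / ((n : ℝ) + 1) ^ 2 + H n / ((n : ℝ) + 1) * z ^ (n + 1))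
      = fun n : ℕ => H (n + 1) / ((n : ℝ) + 1) * z ^ (n + 1) := by
    funext n
    rw [H_succ]
    have h1 : ((n : ℝ) + 1) ≠ 0 := by positivity
    field_simp
    ring
  rw [heq] at htot
  rw [htot.tsum_eq, hL]
  ring
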